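/- Let X be a Polish group with multiplication μ : X × X → X. A subset U ⊆ X is open if and only if μ⁻¹(U) is a countable union of rectangles A × B with A, B Borel subsets of X. -/

import Mathlib

open Set Filter Topology TopologicalSpace Pointwise

lemma aux_open_not_meagre {X : Type*} [TopologicalSpace X] [BaireSpace X] {W : Set X}
    (hW : IsOpen W) (hne : W.Nonempty) (h : IsMeagre W) : False := by
  have hd : Dense Wᶜ := dense_of_mem_residual h
  obtain ⟨x, hx1, hx2⟩ := hd.inter_open_nonempty W hW hne
  exact hx2 hx1

lemma aux_meagre_union {X : Type*} [TopologicalSpace X] {s t : Set X}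
    (hs : IsMeagre s) (ht : IsMeagre t) : IsMeagre (s ∪ t) := by
  rw [IsMeagre, Set.compl_union]
  exact Filter.inter_mem hs ht

/-- Pettis' theorem: a nonmeager Baire-measurable set `C` in a topological group
satisfies that `C * C⁻¹` is a neighborhood of `1`. -/
lemma aux_pettis {X : Type*} [TopologicalSpace X] [Group X] [IsTopologicalGroup X] [BaireSpace X]
    {C : Set X} (hC : BaireMeasurableSet C) (hm : ¬ IsMeagre C) : C * C⁻¹ ∈ 𝓝 (1 : X) := by
  obtain ⟨V, hVopen, hVC⟩ := hC.residualEq_isOpen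
  have hD : IsMeagre {x | ¬ (x ∈ C ↔ x ∈ V)} := by
    rw [IsMeagre]
    have h0 : {x | (x ∈ C) = (x ∈ V)} ∈ residual X := hVC
    refine Filter.mem_of_superset h0 fun x hx => ?_
    simp only [Set.mem_compl_iff, mem_setOf_eq, not_not]
    exact iff_of_eq hx
  set D : Set X := {x | ¬ (x ∈ C ↔ x ∈ V)} with hDdef
  have hVne : V.Nonempty := by
    rcases V.eq_empty_or_nonempty with h | h
    · exfalso
      apply hm
      refine hD.mono fun x hx => ?_
      simp only [hDdef, mem_setOf_eq, h, mem_empty_iff_false, iff_false]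
      intro h'
      exact h' hx
    · exact h
  obtain ⟨u, hu⟩ := hVne
  have hVmem : (fun g : X => g * u) ⁻¹' V ∈ 𝓝 (1 : X) :=
    (continuous_mul_right u).continuousAt.preimage_mem_nhds (by simpa using hVopen.mem_nhds hu)
  refine Filter.mem_of_superset hVmem ?_
  intro g hg
  have hWopen : IsOpen (V ∩ (fun y => g⁻¹ * y) ⁻¹' V) :=
    hVopen.inter (hVopen.preimage (continuous_mul_left g⁻¹))
  have hWne : (V ∩ (fun y => g⁻¹ * y) ⁻¹' V).Nonempty :=
    ⟨g * u, hg, by simpa [inv_mul_cancel_left] using hu⟩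
  have hgD : IsMeagre ((fun y => g⁻¹ * y) ⁻¹' D) :=
    hD.preimage_of_isOpenMap (continuous_mul_left g⁻¹) (Homeomorph.mulLeft g⁻¹).isOpenMap
  have hnsub : ¬ (V ∩ (fun y => g⁻¹ * y) ⁻¹' V) ⊆ (D ∪ (fun y => g⁻¹ * y) ⁻¹' D) := by
    intro hsub
    exact aux_open_not_meagre hWopen hWne ((aux_meagre_union hD hgD).mono hsub)
  obtain ⟨y, hyW, hyD⟩ := Set.not_subset.mp hnsub
  rw [Set.mem_union] at hyD
  push_neg at hyD
  have hyC : y ∈ C := by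
    have := hyD.1
    simp only [hDdef, mem_setOf_eq, not_not] at this
    exact this.mpr hyW.1
  have hgC : g⁻¹ * y ∈ C := by
    have := hyD.2
    simp only [hDdef, Set.mem_preimage, mem_setOf_eq, not_not] at this
    exact this.mpr hyW.2
  exact ⟨y, hyC, (g⁻¹ * y)⁻¹, Set.inv_mem_inv.mpr hgC, by group⟩

/-- In a Polish group `X` with multiplication `μ : X × X → X`,
a set `U ⊆ X` is open iff `μ⁻¹(U)` is a countable union of Borel rectangles. -/
theorem stmt_0 {X : Type*} [TopologicalSpace X] [PolishSpace X] [Group X]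
    [IsTopologicalGroup X] [MeasurableSpace X] [BorelSpace X] (U : Set X) :
    IsOpen U ↔
      ∃ A B : ℕ → Set X, (∀ n, MeasurableSet (A n)) ∧ (∀ n, MeasurableSet (B n)) ∧
        (fun p : X × X => p.1 * p.2) ⁻¹' U = ⋃ n, A n ×ˢ B n := by
  constructor
  · intro hU
    obtain ⟨b, hbc, -, hb⟩ := exists_countable_basis X
    have hOpen : IsOpen ((fun p : X × X => p.1 * p.2) ⁻¹' U) := hU.preimage continuous_mul
    obtain ⟨S, hSsub, hSeq⟩ := (hb.prod hb).open_eq_sUnion hOpen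
    have hScount : S.Countable := (hbc.image2 hbc _).mono hSsub
    rcases S.eq_empty_or_nonempty with h | h
    · refine ⟨fun _ => ∅, fun _ => ∅, fun _ => MeasurableSet.empty, fun _ => MeasurableSet.empty, ?_⟩
      simp [hSeq, h]
    · obtain ⟨f, hf⟩ := hScount.exists_eq_range h
      have hmem : ∀ n, ∃ a ∈ b, ∃ c ∈ b, a ×ˢ c = f n := by
        intro n
        have : f n ∈ S := hf ▸ Set.mem_range_self n
        exact hSsub this
      choose A hA B hB hAB using hmem
      refine ⟨A, B, fun n => (hb.isOpen (hA n)).measurableSet,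
        fun n => (hb.isOpen (hB n)).measurableSet, ?_⟩
      rw [hSeq, hf, Set.sUnion_range]
      exact congrArg _ (funext fun n => (hAB n).symm)
  · rintro ⟨A, B, hA, hB, hU⟩
    have hBaire : BaireSpace X := by
      letI := upgradeIsCompletelyMetrizable X
      infer_instance
    rw [isOpen_iff_mem_nhds]
    intro x hx
    set C : ℕ → Set X := fun n => A n ∩ (fun a => a⁻¹ * x) ⁻¹' B n with hCdef
    have hcov : (Set.univ : Set X) ⊆ ⋃ n, C n := by
      intro a _
      have h1 : (a, a⁻¹ * x) ∈ (fun p : X × X => p.1 * p.2) ⁻¹' U := by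
        simp only [Set.mem_preimage, mul_inv_cancel_left]
        exact hx
      rw [hU] at h1
      obtain ⟨n, hn⟩ := Set.mem_iUnion.mp h1
      exact Set.mem_iUnion.mpr ⟨n, hn.1, hn.2⟩
    have hex : ∃ n, ¬ IsMeagre (C n) := by
      by_contra h
      push_neg at h
      exact aux_open_not_meagre isOpen_univ ⟨1, trivial⟩ ((isMeagre_iUnion h).mono hcov)
    obtain ⟨n, hn⟩ := hex
    have hCmeas : MeasurableSet (C n) :=
      (hA n).inter ((hB n).preimage ((continuous_inv.mul continuous_const).measurable))
    have hnb : C n * (C n)⁻¹ ∈ 𝓝 (1 : X) := aux_pettis hCmeas.baireMeasurableSet hn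
    have key : C n * (C n)⁻¹ ⊆ (fun g => g * x) ⁻¹' U := by
      rintro g ⟨a, ha, binv, hbinv, rfl⟩
      rw [Set.mem_inv] at hbinv
      have h1 : (a, binv * x) ∈ A n ×ˢ B n := ⟨ha.1, by simpa using hbinv.2⟩
      have h2 : (a, binv * x) ∈ (fun p : X × X => p.1 * p.2) ⁻¹' U :=
        hU ▸ Set.mem_iUnion.mpr ⟨n, h1⟩
      simpa [mul_assoc] using h2
    have hVmem : (fun g : X => g * x) ⁻¹' U ∈ 𝓝 (1 : X) := Filter.mem_of_superset hnb key
    have hmap : Filter.map (fun g : X => g * x) (𝓝 (1 : X)) = 𝓝 x := by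
      simpa using (Homeomorph.mulRight x).map_nhds_eq (1 : X)
    rw [← hmap]
    exact Filter.mem_map.mpr hVmem
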